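/- arXiv:1105.0852 — 3 statements merged into one kernel-verified Lean document; each statement's English description precedes it below -/
import Mathlib

section
/- For every linear subspace 𝒩 of the marginal space 𝒯 one has Cᵀ P^D_𝒩 = 0, and consequently Z°⁻ Cᵀ (P^D_ℋ − P^D_𝒩) D⁻¹ C Z°⁻ᵀ = Z°⁻ Cᵀ P^D_ℋ D⁻¹ C Z°⁻ᵀ; i.e. the asymptotic covariance matrix Σ_θ̂ = Z°⁻ Cᵀ P^D_ℋ D⁻¹ C Z°⁻ᵀ of the odds-ratio parameter estimator is the same for every choice of 𝒩 ⊆ 𝒯 (in particular for 𝒩 = 𝒟, ℛ, 𝒞 or {0}, corresponding to multinomial, row-multinomial, column-multinomial and Poisson sampling). -/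
open Matrix BigOperators

noncomputable section

/-- Cells `(j,k)` of a `(J+1) × (K+1)` contingency table. -/
abbrev Cell (J K : ℕ) := Fin (J + 1) × Fin (K + 1)

/-- Standard unit vector `e_{jk}` in `ℝ^I`. -/
def eV {J K : ℕ} (c : Cell J K) : Cell J K → ℝ := Pi.single c 1

/-- Row-sum vector `e_{j+} = Σ_k e_{jk}`. -/
def eRow {J K : ℕ} (j : Fin (J + 1)) : Cell J K → ℝ := ∑ k : Fin (K + 1), eV (j, k)

/-- Column-sum vector `e_{+k} = Σ_j e_{jk}`. -/
def eCol {J K : ℕ} (k : Fin (K + 1)) : Cell J K → ℝ := ∑ j : Fin (J + 1), eV (j, k)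

/-- The all-ones vector `e_{++}`. -/
def eAll (J K : ℕ) : Cell J K → ℝ := ∑ j : Fin (J + 1), ∑ k : Fin (K + 1), eV (j, k)

/-- The row space `ℛ = span{e_{0+},…,e_{J+}}`. -/
def rowSpace (J K : ℕ) : Submodule ℝ (Cell J K → ℝ) :=
  Submodule.span ℝ (Set.range (eRow (J := J) (K := K)))

/-- The column space `𝒞 = span{e_{+0},…,e_{+K}}`. -/
def colSpace (J K : ℕ) : Submodule ℝ (Cell J K → ℝ) :=
  Submodule.span ℝ (Set.range (eCol (J := J) (K := K)))

/-- The diagonal space `𝒟 = span{e_{++}}`. -/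
def diagSpace (J K : ℕ) : Submodule ℝ (Cell J K → ℝ) :=
  Submodule.span ℝ {eAll J K}

/-- The marginal space `𝒯 = ℛ + 𝒞`. -/
def margSpace (J K : ℕ) : Submodule ℝ (Cell J K → ℝ) := rowSpace J K ⊔ colSpace J K

/-- `P` is the `D`-orthogonal projection matrix onto the subspace `S`:
`P x ∈ S` and `x - P x` is `D`-orthogonal to `S`, for every `x`. -/
def IsProjD {J K : ℕ} (D : Matrix (Cell J K) (Cell J K) ℝ) (S : Submodule ℝ (Cell J K → ℝ))
    (P : Matrix (Cell J K) (Cell J K) ℝ) : Prop :=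
  ∀ x, P.mulVec x ∈ S ∧ ∀ s ∈ S, (x - P.mulVec x) ⬝ᵥ D.mulVec s = 0

/-- The `D`-orthogonal complement of a subspace `S`. -/
def perpD {J K : ℕ} (D : Matrix (Cell J K) (Cell J K) ℝ) (S : Submodule ℝ (Cell J K → ℝ)) :
    Submodule ℝ (Cell J K → ℝ) where
  carrier := {x | ∀ t ∈ S, x ⬝ᵥ D.mulVec t = 0}
  add_mem' := by
    intro a b ha hb t ht
    simp only [Set.mem_setOf_eq] at *
    simp [add_dotProduct, ha t ht, hb t ht]
  zero_mem' := by
    intro t ht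
    simp
  smul_mem' := by
    intro c a ha t ht
    simp only [Set.mem_setOf_eq] at *
    simp [smul_dotProduct, ha t ht]

/-- The vector `c_{jk} = e_{jk} + e_{00} - e_{j0} - e_{0k}` (for `1 ≤ j`, `1 ≤ k`). -/
def cVec {J K : ℕ} (j : Fin J) (k : Fin K) : Cell J K → ℝ :=
  eV (j.succ, k.succ) + eV (0, 0) - eV (j.succ, 0) - eV (0, k.succ)

/-- The `I × (JK)` matrix `C` with columns `c_{jk}`. -/
def Cmat (J K : ℕ) : Matrix (Cell J K) (Fin J × Fin K) ℝ :=
  fun i jk => cVec jk.1 jk.2 i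

/-- The vector `b_k = e_{0k} - e_{00}` (for `1 ≤ k`). -/
def bVec {J K : ℕ} (k : Fin K) : Cell J K → ℝ :=
  eV ((0 : Fin (J + 1)), k.succ) - eV (0, 0)

/-- The `I × K` matrix `B` with columns `b_k`. -/
def Bmat (J K : ℕ) : Matrix (Cell J K) (Fin K) ℝ :=
  fun i k => bVec k i

/-- The `I × K` matrix `E` with columns `e_{+1},…,e_{+K}`. -/
def Emat (J K : ℕ) : Matrix (Cell J K) (Fin K) ℝ :=
  fun i k => eCol k.succ i

/-- Column space of a matrix. -/
def colSpan {m n : Type*} [Fintype n] (A : Matrix m n ℝ) : Submodule ℝ (m → ℝ) :=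
  Submodule.span ℝ (Set.range fun j => fun i => A i j)

/-- The reduced `(JK) × L` covariate matrix `Z°` with rows `z_{jk}ᵀ`, `j,k ≥ 1`. -/
def Zred {J K : ℕ} {L : Type*} (Z : Matrix (Cell J K) L ℝ) : Matrix (Fin J × Fin K) L ℝ :=
  fun jk => Z (jk.1.succ, jk.2.succ)

/-- The model space `ℋ = 𝒯 + col(Z)` of the log-linear model
`η_{jk} = α + ρ_j + γ_k + z_{jk}ᵀ θ`. -/
def modelSpace {J K : ℕ} {L : Type*} [Fintype L] (Z : Matrix (Cell J K) L ℝ) :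
    Submodule ℝ (Cell J K → ℝ) :=
  margSpace J K ⊔ colSpan Z

end
lemma cVec_dot_eRow {J K : ℕ} (j : Fin J) (k : Fin K) (j' : Fin (J + 1)) :
    cVec (J := J) (K := K) j k ⬝ᵥ eRow j' = 0 := by
  simp only [cVec, eRow, eV, dotProduct, Finset.sum_apply, Pi.add_apply, Pi.sub_apply,
    Pi.single_apply, Finset.mul_sum]
  rw [Finset.sum_comm]
  simp only [mul_ite, mul_one, mul_zero, Finset.sum_ite_eq', Finset.mem_univ, if_true]
  simp only [Prod.mk.injEq, ite_and, Finset.sum_ite_eq, Finset.sum_ite_eq', Finset.mem_univ,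
    if_true]
  rcases eq_or_ne j' j.succ with h | h <;> rcases eq_or_ne j' (0 : Fin (J+1)) with h0 | h0 <;>
    simp [h, h0, Fin.succ_ne_zero, (Fin.succ_ne_zero j).symm, Finset.sum_ite_eq',
      Finset.sum_ite_eq]

lemma cVec_dot_eCol {J K : ℕ} (j : Fin J) (k : Fin K) (k' : Fin (K + 1)) :
    cVec (J := J) (K := K) j k ⬝ᵥ eCol k' = 0 := by
  simp only [cVec, eCol, eV, dotProduct, Finset.sum_apply, Pi.add_apply, Pi.sub_apply,
    Pi.single_apply, Finset.mul_sum]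
  rw [Finset.sum_comm]
  simp only [mul_ite, mul_one, mul_zero, Finset.sum_ite_eq', Finset.mem_univ, if_true]
  simp only [Prod.mk.injEq, ite_and, Finset.sum_ite_eq, Finset.sum_ite_eq', Finset.mem_univ,
    if_true]
  rcases eq_or_ne k' k.succ with h | h <;> rcases eq_or_ne k' (0 : Fin (K+1)) with h0 | h0 <;>
    simp [h, h0, Fin.succ_ne_zero, (Fin.succ_ne_zero k).symm, Finset.sum_ite_eq',
      Finset.sum_ite_eq]

lemma cVec_dot_marg {J K : ℕ} (j : Fin J) (k : Fin K) {t : Cell J K → ℝ}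
    (ht : t ∈ margSpace J K) : cVec (J := J) (K := K) j k ⬝ᵥ t = 0 := by
  let f : (Cell J K → ℝ) →ₗ[ℝ] ℝ :=
    { toFun := fun x => cVec (J := J) (K := K) j k ⬝ᵥ x
      map_add' := fun x y => dotProduct_add _ _ _
      map_smul' := fun c x => by simp [dotProduct_smul] }
  have hle : margSpace J K ≤ LinearMap.ker f := by
    rw [margSpace, sup_le_iff]
    constructor
    · rw [rowSpace, Submodule.span_le]
      rintro _ ⟨j', rfl⟩
      exact cVec_dot_eRow j k j'
    · rw [colSpace, Submodule.span_le]
      rintro _ ⟨k', rfl⟩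
      exact cVec_dot_eCol j k k'
  exact hle ht

/-- For every subspace `𝒩 ⊆ 𝒯`, `Cᵀ P^D_𝒩 = 0`, and consequently the
asymptotic covariance matrix `Σ_θ̂ = Z°⁻ Cᵀ P^D_ℋ D⁻¹ C Z°⁻ᵀ` is the same for every
choice of `𝒩 ⊆ 𝒯` (in particular for `𝒩 = 𝒟, ℛ, 𝒞, {0}`, i.e. multinomial,
row-multinomial, column-multinomial and Poisson sampling). -/
theorem covariance_invariant_under_sampling_scheme
    {J K L : ℕ} (hJ : 1 ≤ J) (hK : 1 ≤ K) (hL : 1 ≤ L)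
    (μ : Cell J K → ℝ) (hμ : ∀ i, 0 < μ i)
    (Z : Matrix (Cell J K) (Fin L) ℝ)
    (hZrow : ∀ j, Z (j, 0) = 0) (hZcol : ∀ k, Z (0, k) = 0)
    (hZrank : (Zred Z).rank = L)
    (PH : Matrix (Cell J K) (Cell J K) ℝ)
    (hPH : IsProjD (Matrix.diagonal μ) (modelSpace Z) PH)
    (N : Submodule ℝ (Cell J K → ℝ)) (hN : N ≤ margSpace J K)
    (PN : Matrix (Cell J K) (Cell J K) ℝ)
    (hPN : IsProjD (Matrix.diagonal μ) N PN) :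
    (Cmat J K)ᵀ * PN = 0 ∧
    ((Zred Z)ᵀ * Zred Z)⁻¹ * (Zred Z)ᵀ * (Cmat J K)ᵀ * (PH - PN) * (Matrix.diagonal μ)⁻¹ *
        Cmat J K * (((Zred Z)ᵀ * Zred Z)⁻¹ * (Zred Z)ᵀ)ᵀ =
      ((Zred Z)ᵀ * Zred Z)⁻¹ * (Zred Z)ᵀ * (Cmat J K)ᵀ * PH * (Matrix.diagonal μ)⁻¹ *
        Cmat J K * (((Zred Z)ᵀ * Zred Z)⁻¹ * (Zred Z)ᵀ)ᵀ := by
  have h0 : (Cmat J K)ᵀ * PN = 0 := by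
    ext jk i
    have hcol : (fun l => PN l i) ∈ margSpace J K := by
      have h1 := (hPN (Pi.single i 1)).1
      have h2 : PN.mulVec (Pi.single i 1) = fun l => PN l i := by
        funext l
        simp [Matrix.mulVec_single]
      rw [h2] at h1
      exact hN h1
    have := cVec_dot_marg jk.1 jk.2 hcol
    simpa [Matrix.mul_apply, Matrix.transpose_apply, Cmat, dotProduct] using this
  refine ⟨h0, ?_⟩
  have h1 : ((Zred Z)ᵀ * Zred Z)⁻¹ * (Zred Z)ᵀ * (Cmat J K)ᵀ * PN = 0 := by
    rw [Matrix.mul_assoc, h0, Matrix.mul_zero]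
  rw [Matrix.mul_sub, h1, sub_zero]
end

section
/- The (JK)×(JK) matrix CᵀD⁻¹C is invertible, the L×L matrix Z°ᵀ(CᵀD⁻¹C)⁻¹Z° is invertible, and Z°⁻ Cᵀ P^D_ℋ D⁻¹ C Z°⁻ᵀ = (Z°ᵀ(CᵀD⁻¹C)⁻¹Z°)⁻¹; i.e. the asymptotic covariance matrix of the odds-ratio parameter estimator has the explicit representation Σ_θ̂ = (Z°ᵀ(CᵀD⁻¹C)⁻¹Z°)⁻¹. -/
open Matrix BigOperators

section AuxProof

open Matrix

variable {J K : ℕ}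

lemma eV_apply (c i : Cell J K) : eV c i = if i = c then 1 else 0 := by
  simp [eV, Pi.single_apply]

lemma eRow_apply (j : Fin (J + 1)) (i : Cell J K) :
    eRow (K := K) j i = if i.1 = j then 1 else 0 := by
  obtain ⟨i1, i2⟩ := i
  simp only [eRow, Finset.sum_apply, eV_apply, Prod.mk.injEq]
  by_cases h : i1 = j <;> simp [h, Prod.ext_iff, Finset.sum_ite_eq]

lemma eCol_apply (k : Fin (K + 1)) (i : Cell J K) :
    eCol (J := J) k i = if i.2 = k then 1 else 0 := by
  obtain ⟨i1, i2⟩ := i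
  simp only [eCol, Finset.sum_apply, eV_apply, Prod.mk.injEq]
  by_cases h : i2 = k <;> simp [h, Prod.ext_iff, Finset.sum_ite_eq]

lemma Ct_mulVec (x : Cell J K → ℝ) (p : Fin J × Fin K) :
    ((Cmat J K)ᵀ *ᵥ x) p
      = x (p.1.succ, p.2.succ) - x (p.1.succ, 0) - x (0, p.2.succ) + x (0, 0) := by
  show (fun i => (Cmat J K) i p) ⬝ᵥ x = _
  have : (fun i => (Cmat J K) i p) = cVec p.1 p.2 := rfl
  rw [this]
  simp only [cVec, eV, sub_dotProduct, add_dotProduct,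
    single_dotProduct, one_mul]
  ring

lemma C_mulVec_succ (v : Fin J × Fin K → ℝ) (p : Fin J × Fin K) :
    ((Cmat J K) *ᵥ v) (p.1.succ, p.2.succ) = v p := by
  have h : ∀ q : Fin J × Fin K,
      (Cmat J K) (p.1.succ, p.2.succ) q = if q = p then 1 else 0 := by
    intro q
    simp [Cmat, cVec, eV_apply, Prod.ext_iff, Fin.succ_inj, Fin.succ_ne_zero,
      eq_comm (a := p.1) (b := q.1), eq_comm (a := p.2) (b := q.2)]
  show ∑ q, (Cmat J K) (p.1.succ, p.2.succ) q * v q = v p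
  simp [h, Finset.sum_ite_eq]

lemma Ct_mulVec_marg {t : Cell J K → ℝ} (ht : t ∈ margSpace J K) :
    (Cmat J K)ᵀ *ᵥ t = 0 := by
  have hrow : ∀ w, eRow (J := J) (K := K) w ∈ LinearMap.ker ((Cmat J K)ᵀ).mulVecLin := by
    intro w
    rw [LinearMap.mem_ker]
    funext p
    simp only [Matrix.mulVecLin_apply, Ct_mulVec, eRow_apply, Pi.zero_apply]
    ring
  have hcol : ∀ w, eCol (J := J) (K := K) w ∈ LinearMap.ker ((Cmat J K)ᵀ).mulVecLin := by
    intro w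
    rw [LinearMap.mem_ker]
    funext p
    simp only [Matrix.mulVecLin_apply, Ct_mulVec, eCol_apply, Pi.zero_apply]
    ring
  have h : margSpace J K ≤ LinearMap.ker ((Cmat J K)ᵀ).mulVecLin := by
    show rowSpace J K ⊔ colSpace J K ≤ _
    apply sup_le
    · show Submodule.span ℝ _ ≤ _
      rw [Submodule.span_le]
      rintro x ⟨w, rfl⟩
      exact hrow w
    · show Submodule.span ℝ _ ≤ _
      rw [Submodule.span_le]
      rintro x ⟨w, rfl⟩
      exact hcol w
  have := h ht
  simpa only [LinearMap.mem_ker, Matrix.mulVecLin_apply] using this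

lemma mem_marg_of_Ct_eq_zero {x : Cell J K → ℝ} (hx : (Cmat J K)ᵀ *ᵥ x = 0) :
    x ∈ margSpace J K := by
  have hx' : ∀ p : Fin J × Fin K,
      x (p.1.succ, p.2.succ) - x (p.1.succ, 0) - x (0, p.2.succ) + x (0, 0) = 0 := by
    intro p
    rw [← Ct_mulVec, hx]
    rfl
  set ρ : Fin (J + 1) → ℝ := fun j => x (j, 0) - x (0, 0) with hρ
  set γ : Fin (K + 1) → ℝ := fun k => x (0, k) with hγ
  have hdecomp : x = (∑ j, ρ j • eRow j) + (∑ k, γ k • eCol k) := by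
    funext i
    obtain ⟨i1, i2⟩ := i
    have e1 : (∑ j, ρ j • eRow (K := K) j) (i1, i2) = ρ i1 := by
      simp [Finset.sum_apply, eRow_apply, mul_ite, Finset.sum_ite_eq]
    have e2 : (∑ k, γ k • eCol (J := J) k) (i1, i2) = γ i2 := by
      simp [Finset.sum_apply, eCol_apply, mul_ite, Finset.sum_ite_eq]
    rw [Pi.add_apply, e1, e2, hρ, hγ]
    simp only
    rcases Fin.eq_zero_or_eq_succ i1 with h1 | ⟨j, rfl⟩
    · subst h1; ring
    · rcases Fin.eq_zero_or_eq_succ i2 with h2 | ⟨k, rfl⟩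
      · subst h2; ring
      · have := hx' (j, k); simp only at this; linarith
  rw [hdecomp]
  show _ ∈ rowSpace J K ⊔ colSpace J K
  refine Submodule.add_mem _ (Submodule.mem_sup_left ?_) (Submodule.mem_sup_right ?_)
  · exact Submodule.sum_mem _ fun j _ =>
      Submodule.smul_mem _ _ (Submodule.subset_span ⟨j, rfl⟩)
  · exact Submodule.sum_mem _ fun k _ =>
      Submodule.smul_mem _ _ (Submodule.subset_span ⟨k, rfl⟩)

lemma mul_col {m n p : Type*} [Fintype n] (A : Matrix m n ℝ) (B : Matrix n p ℝ)
    (i : m) (b : p) : (A * B) i b = (A *ᵥ fun j => B j b) i := by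
  simp [Matrix.mul_apply, Matrix.mulVec, dotProduct]

lemma transpose_mul_apply {m n p : Type*} [Fintype m] (A : Matrix m n ℝ) (B : Matrix m p ℝ)
    (a : n) (b : p) : (Aᵀ * B) a b = (fun i => A i a) ⬝ᵥ (fun i => B i b) := by
  simp [Matrix.mul_apply, dotProduct, Matrix.transpose_apply]

lemma posDef_conj {n m : Type*} [Fintype n] [Fintype m] {M : Matrix n n ℝ}
    (hM : M.PosDef) {A : Matrix n m ℝ} (hA : Function.Injective A.mulVec) :
    (Aᵀ * M * A).PosDef := by
  have hMt : Mᵀ = M := by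
    rw [← Matrix.conjTranspose_eq_transpose_of_trivial]
    exact hM.1
  rw [Matrix.posDef_iff_dotProduct_mulVec]
  constructor
  · show _ = _
    rw [Matrix.conjTranspose_eq_transpose_of_trivial, Matrix.transpose_mul,
      Matrix.transpose_mul, Matrix.transpose_transpose, hMt, ← Matrix.mul_assoc]
  · intro x hx
    have hAx : A *ᵥ x ≠ 0 := by
      intro h
      exact hx (hA (show A.mulVec x = A.mulVec 0 by rw [Matrix.mulVec_zero]; exact h))
    have hpos := hM.dotProduct_mulVec_pos hAx
    have e : star x ⬝ᵥ ((Aᵀ * M * A) *ᵥ x) = star (A *ᵥ x) ⬝ᵥ (M *ᵥ (A *ᵥ x)) := by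
      rw [star_trivial, star_trivial, ← Matrix.mulVec_mulVec, ← Matrix.mulVec_mulVec,
        Matrix.dotProduct_mulVec, Matrix.vecMul_transpose]
    rw [e]
    exact hpos

lemma dot_D_symm {n : Type*} [Fintype n] {D : Matrix n n ℝ} (hDt : Dᵀ = D)
    (u w : n → ℝ) : u ⬝ᵥ (D *ᵥ w) = w ⬝ᵥ (D *ᵥ u) := by
  have h : u ᵥ* D = D *ᵥ u := by
    conv_lhs => rw [← hDt]
    exact Matrix.vecMul_transpose D u
  rw [Matrix.dotProduct_mulVec, h, dotProduct_comm]

end AuxProof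
/-- `CᵀD⁻¹C` and `Z°ᵀ(CᵀD⁻¹C)⁻¹Z°` are invertible and the asymptotic
covariance matrix of the odds-ratio parameter estimator has the explicit representation
`Σ_θ̂ = Z°⁻ Cᵀ P^D_ℋ D⁻¹ C Z°⁻ᵀ = (Z°ᵀ(CᵀD⁻¹C)⁻¹Z°)⁻¹`. -/
theorem covariance_explicit_representation
    {J K L : ℕ} (hJ : 1 ≤ J) (hK : 1 ≤ K) (hL : 1 ≤ L)
    (μ : Cell J K → ℝ) (hμ : ∀ i, 0 < μ i)
    (Z : Matrix (Cell J K) (Fin L) ℝ)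
    (hZrow : ∀ j, Z (j, 0) = 0) (hZcol : ∀ k, Z (0, k) = 0)
    (hZrank : (Zred Z).rank = L)
    (PH : Matrix (Cell J K) (Cell J K) ℝ)
    (hPH : IsProjD (Matrix.diagonal μ) (modelSpace Z) PH) :
    IsUnit ((Cmat J K)ᵀ * (Matrix.diagonal μ)⁻¹ * Cmat J K) ∧
    IsUnit ((Zred Z)ᵀ * ((Cmat J K)ᵀ * (Matrix.diagonal μ)⁻¹ * Cmat J K)⁻¹ * Zred Z) ∧
    ((Zred Z)ᵀ * Zred Z)⁻¹ * (Zred Z)ᵀ * (Cmat J K)ᵀ * PH * (Matrix.diagonal μ)⁻¹ *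
        Cmat J K * (((Zred Z)ᵀ * Zred Z)⁻¹ * (Zred Z)ᵀ)ᵀ =
      ((Zred Z)ᵀ * ((Cmat J K)ᵀ * (Matrix.diagonal μ)⁻¹ * Cmat J K)⁻¹ * Zred Z)⁻¹ := by
  classical
  set D : Matrix (Cell J K) (Cell J K) ℝ := Matrix.diagonal μ with hD_def
  set Cm : Matrix (Cell J K) (Fin J × Fin K) ℝ := Cmat J K with hCm_def
  set Z0 : Matrix (Fin J × Fin K) (Fin L) ℝ := Zred Z with hZ0_def
  have hD : D.PosDef := Matrix.PosDef.diagonal hμ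
  have hDinv : (D⁻¹).PosDef := hD.inv
  have hCinj : Function.Injective Cm.mulVec := by
    intro v w h
    funext p
    have h1 := congrFun h (p.1.succ, p.2.succ)
    rw [hCm_def] at h1
    rwa [C_mulVec_succ, C_mulVec_succ] at h1
  set M : Matrix (Fin J × Fin K) (Fin J × Fin K) ℝ := Cmᵀ * D⁻¹ * Cm with hM_def
  have hM : M.PosDef := posDef_conj hDinv hCinj
  have hMinv : (M⁻¹).PosDef := hM.inv
  have hZinj : Function.Injective Z0.mulVec := by
    have hrn := LinearMap.finrank_range_add_finrank_ker Z0.mulVecLin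
    have hcard : Module.finrank ℝ (Fin L → ℝ) = L := by simp
    rw [hcard] at hrn
    have hrank : Module.finrank ℝ (LinearMap.range Z0.mulVecLin) = L := hZrank
    have hker0 : Module.finrank ℝ (LinearMap.ker Z0.mulVecLin) = 0 := by omega
    have hker : LinearMap.ker Z0.mulVecLin = ⊥ := Submodule.finrank_eq_zero.mp hker0
    have hinj := LinearMap.ker_eq_bot.mp hker
    intro v w h
    exact hinj (show Z0.mulVecLin v = Z0.mulVecLin w from h)
  set G : Matrix (Fin L) (Fin L) ℝ := Z0ᵀ * M⁻¹ * Z0 with hG_def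
  have hG : G.PosDef := posDef_conj hMinv hZinj
  refine ⟨hM.isUnit, hG.isUnit, ?_⟩
  have hZtZ : (Z0ᵀ * Z0).PosDef := by
    have := posDef_conj (Matrix.PosDef.one (n := Fin J × Fin K) (R := ℝ)) hZinj
    rwa [Matrix.mul_one] at this
  letI := hM.isUnit.invertible
  letI := hG.isUnit.invertible
  letI := hZtZ.isUnit.invertible
  have hDt : Dᵀ = D := Matrix.diagonal_transpose μ
  have hDinvT : (D⁻¹)ᵀ = D⁻¹ := by rw [Matrix.transpose_nonsing_inv, hDt]
  have hDdet : IsUnit D.det := (Matrix.isUnit_iff_isUnit_det _).mp hD.isUnit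
  have hDinvD : D⁻¹ * D = 1 := Matrix.nonsing_inv_mul D hDdet
  have hMt : Mᵀ = M := by
    rw [← Matrix.conjTranspose_eq_transpose_of_trivial]
    exact hM.1
  have hMinvT : (M⁻¹)ᵀ = M⁻¹ := by rw [Matrix.transpose_nonsing_inv, hMt]
  have hMdet : IsUnit M.det := (Matrix.isUnit_iff_isUnit_det _).mp hM.isUnit
  have hMinvM : M⁻¹ * M = 1 := Matrix.nonsing_inv_mul M hMdet
  have hCtZ : Cmᵀ * Z = Z0 := by
    ext p l
    rw [hCm_def, mul_col, Ct_mulVec]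
    have h1 : Z (p.1.succ, 0) l = 0 := by rw [hZrow]; rfl
    have h2 : Z (0, p.2.succ) l = 0 := by rw [hZcol]; rfl
    have h3 : Z ((0 : Fin (J + 1)), (0 : Fin (K + 1))) l = 0 := by rw [hZrow]; rfl
    rw [h1, h2, h3, hZ0_def]
    simp [Zred]
  set N : Matrix (Cell J K) (Fin J × Fin K) ℝ := D⁻¹ * Cm with hN_def
  set V : Matrix (Cell J K) (Fin L) ℝ := D⁻¹ * Cm * (M⁻¹ * Z0) with hV_def
  have hM' : Cmᵀ * (D⁻¹ * Cm) = M := by rw [hM_def, Matrix.mul_assoc]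
  have hCtV : Cmᵀ * V = Z0 := by
    rw [hV_def, ← Matrix.mul_assoc, ← Matrix.mul_assoc, hM',
      Matrix.mul_nonsing_inv M hMdet, Matrix.one_mul]
  have hVmem : ∀ a, (fun i => V i a) ∈ modelSpace Z := by
    have hT : Cmᵀ * (Z - V) = 0 := by rw [Matrix.mul_sub, hCtZ, hCtV, sub_self]
    intro a
    have h2 : (fun i => (Z - V) i a) ∈ margSpace J K := by
      apply mem_marg_of_Ct_eq_zero
      funext p
      have h4 := congrFun (congrFun hT p) a
      rw [mul_col] at h4
      rw [← hCm_def]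
      exact h4
    have h3 : (fun i => Z i a) ∈ colSpan Z := Submodule.subset_span ⟨a, rfl⟩
    have hVZ : (fun i => V i a) = (fun i => Z i a) - (fun i => (Z - V) i a) := by
      funext i; simp [Matrix.sub_apply]
    rw [hVZ]
    show _ ∈ margSpace J K ⊔ colSpan Z
    exact Submodule.sub_mem _ (Submodule.mem_sup_right h3) (Submodule.mem_sup_left h2)
  have hVt : Vᵀ * D = Z0ᵀ * M⁻¹ * Cmᵀ := by
    rw [hV_def]
    rw [Matrix.transpose_mul, Matrix.transpose_mul, Matrix.transpose_mul, hMinvT, hDinvT]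
    rw [Matrix.mul_assoc (Z0ᵀ * M⁻¹) (Cmᵀ * D⁻¹) D, Matrix.mul_assoc (Cmᵀ) (D⁻¹) D,
      hDinvD, Matrix.mul_one]
  have hVDN : Vᵀ * D * N = Z0ᵀ := by
    rw [hVt, hN_def, Matrix.mul_assoc (Z0ᵀ * M⁻¹) (Cmᵀ) (D⁻¹ * Cm), hM',
      Matrix.mul_assoc, hMinvM, Matrix.mul_one]
  have hmain : Vᵀ * D * (PH * N) = Vᵀ * D * N := by
    rw [Matrix.mul_assoc (Vᵀ) D (PH * N), Matrix.mul_assoc (Vᵀ) D N]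
    ext a b
    rw [transpose_mul_apply, transpose_mul_apply]
    have hPN : (fun j => (PH * N) j b) = PH *ᵥ (fun i => N i b) := by
      funext j; rw [mul_col]
    have hcol1 : (fun i => (D * (PH * N)) i b) = D *ᵥ (PH *ᵥ (fun i => N i b)) := by
      funext i
      rw [mul_col, hPN]
    have hcol2 : (fun i => (D * N) i b) = D *ᵥ (fun i => N i b) := by
      funext i; rw [mul_col]
    rw [hcol1, hcol2]
    have horth := (hPH (fun i => N i b)).2 (fun i => V i a) (hVmem a)
    have hsym := dot_D_symm hDt ((fun i => N i b) - PH *ᵥ (fun i => N i b)) (fun i => V i a)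
    rw [horth] at hsym
    have h5 : (fun i => V i a) ⬝ᵥ (D *ᵥ ((fun i => N i b) - PH *ᵥ (fun i => N i b))) = 0 :=
      hsym.symm
    rw [Matrix.mulVec_sub, dotProduct_sub, sub_eq_zero] at h5
    exact h5.symm
  have hθ : ∀ b : Fin J × Fin K,
      ∃ c : Fin L → ℝ, Cmᵀ *ᵥ (PH *ᵥ (fun i => N i b)) = Z0 *ᵥ c := by
    intro b
    have hmem : PH *ᵥ (fun i => N i b) ∈ margSpace J K ⊔ colSpan Z :=
      (hPH (fun i => N i b)).1
    obtain ⟨t, ht, z, hz, hsum⟩ := Submodule.mem_sup.mp hmem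
    obtain ⟨c, hc⟩ := (Submodule.mem_span_range_iff_exists_fun ℝ).mp hz
    refine ⟨c, ?_⟩
    have hzc : z = Z *ᵥ c := by
      rw [← hc]
      funext i
      simp [Matrix.mulVec, dotProduct, Finset.sum_apply, mul_comm]
    rw [← hsum, Matrix.mulVec_add, hCm_def, Ct_mulVec_marg ht, hzc,
      Matrix.mulVec_mulVec, ← hCm_def, hCtZ]
    simp
  choose θfun hθfun using hθ
  set Θ : Matrix (Fin L) (Fin J × Fin K) ℝ := fun l b => θfun b l with hΘ_def
  have hA' : Cmᵀ * (PH * N) = Z0 * Θ := by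
    ext p b
    have hPN : (fun j => (PH * N) j b) = PH *ᵥ (fun i => N i b) := by
      funext j; rw [mul_col]
    have e1 : (Cmᵀ * (PH * N)) p b = (Cmᵀ *ᵥ (PH *ᵥ (fun i => N i b))) p := by
      rw [mul_col, hPN]
    rw [e1, hθfun b, mul_col]
  have hstar : Z0ᵀ * M⁻¹ * (Cmᵀ * (PH * N)) = Z0ᵀ := by
    have e1 : Z0ᵀ * M⁻¹ * (Cmᵀ * (PH * N)) = Vᵀ * D * (PH * N) := by
      rw [hVt, Matrix.mul_assoc (Z0ᵀ * M⁻¹) Cmᵀ (PH * N)]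
    rw [e1, hmain, hVDN]
  rw [hA'] at hstar
  have hGΘ : G * Θ = Z0ᵀ := by
    rw [hG_def, Matrix.mul_assoc (Z0ᵀ * M⁻¹) Z0 Θ]
    exact hstar
  have hΘval : Θ = G⁻¹ * Z0ᵀ := by
    have h6 := congrArg (fun X => G⁻¹ * X) hGΘ
    rw [← Matrix.mul_assoc, Matrix.inv_mul_of_invertible, Matrix.one_mul] at h6
    exact h6
  have key : Cmᵀ * PH * D⁻¹ * Cm = Z0 * (G⁻¹ * Z0ᵀ) := by
    have e : Cmᵀ * PH * D⁻¹ * Cm = Cmᵀ * (PH * N) := by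
      rw [hN_def, Matrix.mul_assoc Cmᵀ PH D⁻¹, Matrix.mul_assoc Cmᵀ (PH * D⁻¹) Cm,
        Matrix.mul_assoc PH D⁻¹ Cm]
    rw [e, hA', hΘval]
  have hQt : ((Z0ᵀ * Z0)⁻¹ * Z0ᵀ)ᵀ = Z0 * (Z0ᵀ * Z0)⁻¹ := by
    rw [Matrix.transpose_mul, Matrix.transpose_transpose, Matrix.transpose_nonsing_inv,
      Matrix.transpose_mul, Matrix.transpose_transpose]
  calc (Z0ᵀ * Z0)⁻¹ * Z0ᵀ * Cmᵀ * PH * D⁻¹ * Cm * ((Z0ᵀ * Z0)⁻¹ * Z0ᵀ)ᵀ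
      = (Z0ᵀ * Z0)⁻¹ * Z0ᵀ * (Cmᵀ * PH * D⁻¹ * Cm) * (Z0 * (Z0ᵀ * Z0)⁻¹) := by
        rw [hQt]; simp only [Matrix.mul_assoc]
    _ = (Z0ᵀ * Z0)⁻¹ * Z0ᵀ * (Z0 * (G⁻¹ * Z0ᵀ)) * (Z0 * (Z0ᵀ * Z0)⁻¹) := by rw [key]
    _ = G⁻¹ := by
        simp only [Matrix.mul_assoc]
        rw [← Matrix.mul_assoc Z0ᵀ Z0 (Z0ᵀ * Z0)⁻¹, Matrix.mul_inv_of_invertible,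
          Matrix.mul_one, ← Matrix.mul_assoc Z0ᵀ Z0 G⁻¹, ← Matrix.mul_assoc,
          Matrix.inv_mul_of_invertible, Matrix.one_mul]
end

section
/- Set V = P^D_{𝒯^{⊥_D}} Z. Then VᵀDV is invertible and Bᵀ P^D_ℋ D⁻¹ C Z°⁻ᵀ = BᵀV(VᵀDV)⁻¹; i.e. the γθ-block of the asymptotic covariance matrix Σ_λ̂ has this representation. -/
open Matrix BigOperators

noncomputable section AuxHelpers
open Matrix

namespace GTAux

variable {J K : ℕ}

lemma dot_eV (y : Cell J K → ℝ) (c : Cell J K) : y ⬝ᵥ eV c = y c := by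
  simp [eV]

lemma dot_cVec (y : Cell J K → ℝ) (j : Fin J) (k : Fin K) :
    y ⬝ᵥ cVec j k = y (j.succ, k.succ) + y (0, 0) - y (j.succ, 0) - y (0, k.succ) := by
  simp only [cVec, dotProduct_add, dotProduct_sub, dot_eV]

lemma eRow_apply (j' a : Fin (J + 1)) (b : Fin (K + 1)) :
    eRow (K := K) j' (a, b) = if a = j' then 1 else 0 := by
  classical
  simp only [eRow, Finset.sum_apply, eV, Pi.single_apply, Prod.mk.injEq]
  by_cases h : a = j' <;> simp [h]

lemma eCol_apply (k' : Fin (K + 1)) (a : Fin (J + 1)) (b : Fin (K + 1)) :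
    eCol (J := J) k' (a, b) = if b = k' then 1 else 0 := by
  classical
  simp only [eCol, Finset.sum_apply, eV, Pi.single_apply, Prod.mk.injEq]
  by_cases h : b = k' <;> simp [h]

lemma marg_dot_cVec (j : Fin J) (k : Fin K) {t : Cell J K → ℝ} (ht : t ∈ margSpace J K) :
    t ⬝ᵥ cVec j k = 0 := by
  have ht' : t ∈ Submodule.span ℝ
      (Set.range (eRow (J := J) (K := K)) ∪ Set.range (eCol (J := J) (K := K))) := by
    rw [Submodule.span_union]; exact ht
  clear ht
  induction ht' using Submodule.span_induction with
  | mem v hv =>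
    rcases hv with ⟨j', rfl⟩ | ⟨k', rfl⟩
    · rw [dot_cVec, eRow_apply, eRow_apply, eRow_apply, eRow_apply]; ring
    · rw [dot_cVec, eCol_apply, eCol_apply, eCol_apply, eCol_apply]; ring
  | zero => simp
  | add u v _ _ hu hv => rw [add_dotProduct, hu, hv, add_zero]
  | smul a u _ hu => rw [smul_dotProduct, hu, smul_zero]

lemma mem_perpD {D : Matrix (Cell J K) (Cell J K) ℝ} {S : Submodule ℝ (Cell J K → ℝ)}
    {x : Cell J K → ℝ} : x ∈ perpD D S ↔ ∀ t ∈ S, x ⬝ᵥ D *ᵥ t = 0 := Iff.rfl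

lemma pos_dot {μ : Cell J K → ℝ} (hμ : ∀ i, 0 < μ i) (v : Cell J K → ℝ)
    (h : v ⬝ᵥ diagonal μ *ᵥ v = 0) : v = 0 := by
  have hsum : ∑ i : Cell J K, v i * (μ i * v i) = 0 := by
    simpa [dotProduct, mulVec_diagonal] using h
  have h0 : ∀ i ∈ Finset.univ, v i * (μ i * v i) = 0 := by
    refine (Finset.sum_eq_zero_iff_of_nonneg ?_).mp hsum
    intro i _
    have := (hμ i).le
    nlinarith [sq_nonneg (v i)]
  funext i
  have hi := h0 i (Finset.mem_univ i)
  have h2 : μ i * (v i * v i) = 0 := by rw [← hi]; ring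
  rcases mul_eq_zero.mp h2 with h | h
  · exact absurd h (hμ i).ne'
  · exact mul_self_eq_zero.mp h

lemma eq_zero_of_border (y : Cell J K → ℝ) (hr : ∀ j, y (j, 0) = 0) (hc : ∀ k, y (0, k) = 0)
    (h : ∀ j k, y ⬝ᵥ cVec j k = 0) : y = 0 := by
  funext p
  obtain ⟨a, b⟩ := p
  induction a using Fin.cases with
  | zero => simpa using hc b
  | succ j =>
    induction b using Fin.cases with
    | zero => simpa using hr j.succ
    | succ k =>
      have hjk := h j k
      rw [dot_cVec] at hjk
      have h1 := hr j.succ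
      have h2 := hc k.succ
      have h3 := hr 0
      simp only [Pi.zero_apply]
      linarith

variable {μ : Cell J K → ℝ}

lemma Dinv_eq (hμ : ∀ i, 0 < μ i) :
    (diagonal μ)⁻¹ = diagonal (fun i => (μ i)⁻¹) := by
  apply Matrix.inv_eq_right_inv
  rw [diagonal_mul_diagonal]
  have hfun : (fun i => μ i * (μ i)⁻¹) = fun _ => (1 : ℝ) :=
    funext fun i => mul_inv_cancel₀ (hμ i).ne'
  rw [hfun, diagonal_one]

lemma D_Dinv_cancel (hμ : ∀ i, 0 < μ i) (x : Cell J K → ℝ) :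
    diagonal μ *ᵥ ((diagonal μ)⁻¹ *ᵥ x) = x := by
  rw [Dinv_eq hμ]
  funext i
  simp only [mulVec_diagonal]
  rw [← mul_assoc, mul_inv_cancel₀ (hμ i).ne', one_mul]

lemma dinv_cVec_mem (hμ : ∀ i, 0 < μ i) (j : Fin J) (k : Fin K) :
    (diagonal μ)⁻¹ *ᵥ cVec j k ∈ perpD (diagonal μ) (margSpace J K) := by
  rw [mem_perpD]
  intro t ht
  have hEq : ((diagonal μ)⁻¹ *ᵥ cVec j k) ⬝ᵥ (diagonal μ *ᵥ t) = cVec j k ⬝ᵥ t := by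
    rw [Dinv_eq hμ]
    simp only [dotProduct, mulVec_diagonal]
    refine Finset.sum_congr rfl fun i _ => ?_
    have hne := (hμ i).ne'
    field_simp
  rw [hEq, dotProduct_comm]
  exact marg_dot_cVec j k ht

lemma perp_dot_cVec (hμ : ∀ i, 0 < μ i) (y : Cell J K → ℝ)
    (h : ∀ w ∈ perpD (diagonal μ) (margSpace J K), y ⬝ᵥ diagonal μ *ᵥ w = 0)
    (j : Fin J) (k : Fin K) : y ⬝ᵥ cVec j k = 0 := by
  have := h _ (dinv_cVec_mem hμ j k)
  rwa [D_Dinv_cancel hμ] at this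

lemma mem_marg_of (hμ : ∀ i, 0 < μ i) (y : Cell J K → ℝ)
    (h : ∀ w ∈ perpD (diagonal μ) (margSpace J K), y ⬝ᵥ diagonal μ *ᵥ w = 0) :
    y ∈ margSpace J K := by
  have hyc := perp_dot_cVec hμ y h
  have ht : (fun p : Cell J K => y (p.1, 0) + y (0, p.2) - y (0, 0)) ∈ margSpace J K := by
    have hEq : (fun p : Cell J K => y (p.1, 0) + y (0, p.2) - y (0, 0)) =
        (∑ j : Fin (J + 1), (y (j, 0) - y (0, 0)) • eRow j) +
          ∑ k : Fin (K + 1), y (0, k) • eCol k := by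
      funext p
      obtain ⟨a, b⟩ := p
      simp only [Pi.add_apply, Finset.sum_apply, Pi.smul_apply, smul_eq_mul, eRow_apply,
        eCol_apply, mul_ite, mul_one, mul_zero, Finset.sum_ite_eq, Finset.mem_univ, if_true]
      ring
    rw [hEq]
    refine Submodule.add_mem _
      (Submodule.sum_mem _ fun j _ => Submodule.smul_mem _ _ ?_)
      (Submodule.sum_mem _ fun k _ => Submodule.smul_mem _ _ ?_)
    · exact Submodule.mem_sup_left (Submodule.subset_span ⟨j, rfl⟩)
    · exact Submodule.mem_sup_right (Submodule.subset_span ⟨k, rfl⟩)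
  have hu : y - (fun p : Cell J K => y (p.1, 0) + y (0, p.2) - y (0, 0)) = 0 := by
    apply eq_zero_of_border
    · intro j; simp
    · intro k; simp
    · intro j k
      rw [sub_dotProduct, hyc j k, dot_cVec]
      simp only
      ring
  have : y = fun p : Cell J K => y (p.1, 0) + y (0, p.2) - y (0, 0) := by
    rwa [sub_eq_zero] at hu
  rw [this]
  exact ht

lemma mulVec_dot {m n : Type*} [Fintype m] [Fintype n] (A : Matrix m n ℝ) (x : n → ℝ)
    (w : m → ℝ) : (A *ᵥ x) ⬝ᵥ w = x ⬝ᵥ (Aᵀ *ᵥ w) := by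
  rw [dotProduct_comm, dotProduct_mulVec, ← mulVec_transpose, dotProduct_comm]

lemma projT_fix {D P : Matrix (Cell J K) (Cell J K) ℝ} {S : Submodule ℝ (Cell J K → ℝ)}
    (hP : IsProjD D S P) {w : Cell J K → ℝ} (hw : w ∈ S) :
    Pᵀ *ᵥ (D *ᵥ w) = D *ᵥ w := by
  funext i
  have h := (hP (Pi.single i 1)).2 w hw
  rw [sub_dotProduct, mulVec_dot] at h
  have h1 : Pi.single i (1 : ℝ) ⬝ᵥ (D *ᵥ w) = (D *ᵥ w) i := by simp
  have h2 : Pi.single i (1 : ℝ) ⬝ᵥ (Pᵀ *ᵥ (D *ᵥ w)) = (Pᵀ *ᵥ (D *ᵥ w)) i := by simp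
  rw [h1, h2] at h
  linarith

lemma col_mul {m' n' p' : Type*} [Fintype n'] (A : Matrix m' n' ℝ) (B : Matrix n' p' ℝ)
    (j : p') : (fun i => (A * B) i j) = A *ᵥ fun i => B i j := by
  funext i
  simp [Matrix.mul_apply, Matrix.mulVec, dotProduct]

lemma inj_of_rank {m' : Type*} [Fintype m'] {L : ℕ} (A : Matrix m' (Fin L) ℝ)
    (h : A.rank = L) : ∀ a, A *ᵥ a = 0 → a = 0 := by
  have h1 := LinearMap.finrank_range_add_finrank_ker A.mulVecLin
  rw [Module.finrank_fin_fun] at h1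
  unfold Matrix.rank at h
  have hk : Module.finrank ℝ (LinearMap.ker A.mulVecLin) = 0 := by omega
  have hker : LinearMap.ker A.mulVecLin = ⊥ := Submodule.finrank_eq_zero.mp hk
  intro a ha
  have hmem : a ∈ LinearMap.ker A.mulVecLin := by
    simpa [LinearMap.mem_ker, Matrix.mulVecLin_apply] using ha
  rw [hker] at hmem
  simpa using hmem

lemma isUnit_of_ker {L : ℕ} (M : Matrix (Fin L) (Fin L) ℝ)
    (h : ∀ a, M *ᵥ a = 0 → a = 0) : IsUnit M := by
  apply Matrix.mulVec_injective_iff_isUnit.mp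
  intro a b hab
  have h0 : M *ᵥ (a - b) = 0 := by
    rw [Matrix.mulVec_sub]
    simpa [sub_eq_zero] using hab
  exact sub_eq_zero.mp (h _ h0)

end GTAux

end AuxHelpers
/-- with `V = P^D_{𝒯^{⊥_D}} Z`, the matrix `VᵀDV` is invertible and the
`γθ`-block of the asymptotic covariance matrix `Σ_λ̂` satisfies
`Bᵀ P^D_ℋ D⁻¹ C Z°⁻ᵀ = BᵀV(VᵀDV)⁻¹`. -/
theorem gamma_theta_block_representation
    {J K L : ℕ} (hJ : 1 ≤ J) (hK : 1 ≤ K) (hL : 1 ≤ L)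
    (μ : Cell J K → ℝ) (hμ : ∀ i, 0 < μ i)
    (Z : Matrix (Cell J K) (Fin L) ℝ)
    (hZrow : ∀ j, Z (j, 0) = 0) (hZcol : ∀ k, Z (0, k) = 0)
    (hZrank : (Zred Z).rank = L)
    (PH : Matrix (Cell J K) (Cell J K) ℝ)
    (hPH : IsProjD (Matrix.diagonal μ) (modelSpace Z) PH)
    (PTperp : Matrix (Cell J K) (Cell J K) ℝ)
    (hPTperp : IsProjD (Matrix.diagonal μ) (perpD (Matrix.diagonal μ) (margSpace J K)) PTperp)
    (V : Matrix (Cell J K) (Fin L) ℝ) (hV : V = PTperp * Z) :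
    IsUnit (Vᵀ * Matrix.diagonal μ * V) ∧
    (Bmat J K)ᵀ * PH * (Matrix.diagonal μ)⁻¹ * Cmat J K *
        (((Zred Z)ᵀ * Zred Z)⁻¹ * (Zred Z)ᵀ)ᵀ =
      (Bmat J K)ᵀ * V * (Vᵀ * Matrix.diagonal μ * V)⁻¹ := by
    classical
  open GTAux in
  set D := Matrix.diagonal μ with hD
  set M := Vᵀ * D * V with hM
  -- D is invertible
  have hdet : IsUnit D.det := by
    rw [hD, det_diagonal]
    exact (Finset.prod_pos fun i _ => hμ i).ne'.isUnit
  have hDD : D * D⁻¹ = 1 := Matrix.mul_nonsing_inv D hdet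
  -- injectivity of Zred
  have hZredinj : ∀ a, Zred Z *ᵥ a = 0 → a = 0 := GTAux.inj_of_rank _ hZrank
  -- injectivity of V
  have hVinj : ∀ a, V *ᵥ a = 0 → a = 0 := by
    intro a ha
    have hPZa : PTperp *ᵥ (Z *ᵥ a) = 0 := by
      rw [Matrix.mulVec_mulVec, ← hV]; exact ha
    have hZa : ∀ w ∈ perpD D (margSpace J K), (Z *ᵥ a) ⬝ᵥ D *ᵥ w = 0 := by
      intro w hw
      have h0 := (hPTperp (Z *ᵥ a)).2 w hw
      rwa [hPZa, sub_zero] at h0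
    have hcz : ∀ j k, (Z *ᵥ a) ⬝ᵥ cVec j k = 0 := GTAux.perp_dot_cVec hμ _ hZa
    have hzero : Z *ᵥ a = 0 := by
      apply GTAux.eq_zero_of_border _ _ _ hcz
      · intro j; simp [Matrix.mulVec, hZrow j]
      · intro k; simp [Matrix.mulVec, hZcol k]
    apply hZredinj
    funext jk
    have := congrFun hzero (jk.1.succ, jk.2.succ)
    simpa [Zred, Matrix.mulVec] using this
  -- invertibility of M = VᵀDV
  have hMker : ∀ a, M *ᵥ a = 0 → a = 0 := by
    intro a ha
    have h2 : (V *ᵥ a) ⬝ᵥ D *ᵥ (V *ᵥ a) = a ⬝ᵥ M *ᵥ a := by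
      rw [GTAux.mulVec_dot V a, Matrix.mulVec_mulVec, Matrix.mulVec_mulVec, hM,
        Matrix.mul_assoc]
    have h1 : a ⬝ᵥ M *ᵥ a = 0 := by rw [ha]; simp
    exact hVinj a (GTAux.pos_dot hμ _ (by rw [h2, h1]))
  have hMunit : IsUnit M := GTAux.isUnit_of_ker M hMker
  have hMinvM : M⁻¹ * M = 1 := Matrix.nonsing_inv_mul M ((Matrix.isUnit_iff_isUnit_det M).mp hMunit)
  -- invertibility of G = Zredᵀ Zred
  have hGunit : IsUnit ((Zred Z)ᵀ * Zred Z) := by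
    apply GTAux.isUnit_of_ker
    intro a ha
    have h2 : (Zred Z *ᵥ a) ⬝ᵥ (Zred Z *ᵥ a) = a ⬝ᵥ ((Zred Z)ᵀ * Zred Z) *ᵥ a := by
      rw [GTAux.mulVec_dot (Zred Z) a, Matrix.mulVec_mulVec]
    have h1 : a ⬝ᵥ ((Zred Z)ᵀ * Zred Z) *ᵥ a = 0 := by rw [ha]; simp
    exact hZredinj a (dotProduct_self_eq_zero.mp (by rw [h2, h1]))
  refine ⟨hMunit, ?_⟩
  -- symmetric facts
  have hMsymm : Mᵀ = M := by
    rw [hM, Matrix.transpose_mul, Matrix.transpose_mul, Matrix.transpose_transpose, hD,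
      Matrix.diagonal_transpose, Matrix.mul_assoc]
  have hMinvT : (M⁻¹)ᵀ = M⁻¹ := by
    rw [Matrix.transpose_nonsing_inv, hMsymm]
  set Q := V * M⁻¹ * (Vᵀ * D) with hQ
  -- columns of V lie in model space, and in perp of marg space
  have hVcol : ∀ b, V *ᵥ b = PTperp *ᵥ (Z *ᵥ b) := by
    intro b; rw [Matrix.mulVec_mulVec, ← hV]
  have hZb_mem : ∀ b, Z *ᵥ b ∈ colSpan Z := by
    intro b
    have hEq : Z *ᵥ b = ∑ l, b l • fun i => Z i l := by
      funext i
      simp [Matrix.mulVec, dotProduct, Finset.sum_apply, mul_comm]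
    rw [hEq]
    exact Submodule.sum_mem _ fun l _ =>
      Submodule.smul_mem _ _ (Submodule.subset_span ⟨l, rfl⟩)
  have hresid : ∀ z : Cell J K → ℝ, z - PTperp *ᵥ z ∈ margSpace J K := fun z =>
    GTAux.mem_marg_of hμ _ fun w hw => (hPTperp z).2 w hw
  have hVmem : ∀ b, V *ᵥ b ∈ modelSpace Z := by
    intro b
    have hEq : V *ᵥ b = (Z *ᵥ b) - ((Z *ᵥ b) - PTperp *ᵥ (Z *ᵥ b)) := by
      rw [hVcol, sub_sub_cancel]
    rw [hEq]
    exact Submodule.sub_mem _ (Submodule.mem_sup_right (hZb_mem b))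
      (Submodule.mem_sup_left (hresid _))
  have hVperp : ∀ b, V *ᵥ b ∈ perpD D (margSpace J K) := by
    intro b; rw [hVcol]; exact (hPTperp (Z *ᵥ b)).1
  -- key: Qᵀ * (D * V) = D * V
  have hQT : Qᵀ * (D * V) = D * V := by
    have hQTeq : Qᵀ = D * V * (M⁻¹ * Vᵀ) := by
      rw [hQ, Matrix.transpose_mul, Matrix.transpose_mul, Matrix.transpose_mul,
        Matrix.transpose_transpose, hMinvT, hD, Matrix.diagonal_transpose]
    rw [hQTeq, Matrix.mul_assoc (D * V), Matrix.mul_assoc M⁻¹, ← Matrix.mul_assoc Vᵀ D V,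
      ← hM, hMinvM, Matrix.mul_one]
  -- the per-column projection identity
  have hQproj : ∀ x ∈ perpD D (margSpace J K), PH *ᵥ x = Q *ᵥ x := by
    intro x hx
    have hQx : Q *ᵥ x = V *ᵥ ((M⁻¹ * (Vᵀ * D)) *ᵥ x) := by
      rw [Matrix.mulVec_mulVec, ← Matrix.mul_assoc, hQ]
    have hmarg : ∀ t' ∈ margSpace J K, (x - Q *ᵥ x) ⬝ᵥ D *ᵥ t' = 0 := by
      intro t' ht'
      rw [sub_dotProduct, hx t' ht', hQx, hVperp _ t' ht', sub_zero]
    have hkey : ∀ a, (x - Q *ᵥ x) ⬝ᵥ D *ᵥ (V *ᵥ a) = 0 := by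
      intro a
      have hQdot : (Q *ᵥ x) ⬝ᵥ (D *ᵥ (V *ᵥ a)) = x ⬝ᵥ (D *ᵥ (V *ᵥ a)) := by
        have hQT' : Qᵀ * D * V = D * V := by rw [Matrix.mul_assoc, hQT]
        rw [GTAux.mulVec_dot Q x, Matrix.mulVec_mulVec, Matrix.mulVec_mulVec, hQT',
          ← Matrix.mulVec_mulVec]
      rw [sub_dotProduct, hQdot, sub_self]
    have horth : ∀ s ∈ modelSpace Z, (x - Q *ᵥ x) ⬝ᵥ D *ᵥ s = 0 := by
      intro s hs
      obtain ⟨t, ht, u, hu, rfl⟩ := Submodule.mem_sup.mp hs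
      rw [Matrix.mulVec_add, dotProduct_add, hmarg t ht, zero_add]
      clear hs
      induction hu using Submodule.span_induction with
      | mem v hv =>
        obtain ⟨l, rfl⟩ := hv
        show (x - Q *ᵥ x) ⬝ᵥ D *ᵥ (fun i => Z i l) = 0
        have hZe : Z *ᵥ Pi.single l 1 = fun i => Z i l := by
          funext i; simp [Matrix.mulVec]
        have hsplit : (fun i => Z i l) =
            V *ᵥ Pi.single l 1 + ((fun i => Z i l) - V *ᵥ Pi.single l 1) := by
          rw [add_sub_cancel]
        have hg2 : (fun i => Z i l) - V *ᵥ Pi.single l 1 ∈ margSpace J K := by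
          rw [hVcol, hZe]; exact hresid _
        rw [hsplit, Matrix.mulVec_add, dotProduct_add, hmarg _ hg2, hkey, zero_add]
      | zero => simp
      | add u1 u2 _ _ h1 h2 => rw [Matrix.mulVec_add, dotProduct_add, h1, h2, add_zero]
      | smul a u1 _ h1 => rw [Matrix.mulVec_smul, dotProduct_smul, h1, smul_zero]
    -- uniqueness
    have hdmem : PH *ᵥ x - Q *ᵥ x ∈ modelSpace Z :=
      Submodule.sub_mem _ (hPH x).1 (by rw [hQx]; exact hVmem _)
    have h1 := (hPH x).2 _ hdmem
    have h2 := horth _ hdmem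
    have hrw : (x - Q *ᵥ x) - (x - PH *ᵥ x) = PH *ᵥ x - Q *ᵥ x := by abel
    have h3 : (PH *ᵥ x - Q *ᵥ x) ⬝ᵥ D *ᵥ (PH *ᵥ x - Q *ᵥ x) = 0 := by
      have hsd := sub_dotProduct (x - Q *ᵥ x) (x - PH *ᵥ x) (D *ᵥ (PH *ᵥ x - Q *ᵥ x))
      rw [hrw] at hsd
      rw [hsd, h2, h1, sub_zero]
    have := GTAux.pos_dot hμ _ h3
    exact sub_eq_zero.mp this
  -- matrix identities
  have hPHC : PH * (D⁻¹ * Cmat J K) = Q * (D⁻¹ * Cmat J K) := by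
    funext i jk
    have e1 := congrFun (GTAux.col_mul PH (D⁻¹ * Cmat J K) jk) i
    have e2 := congrFun (GTAux.col_mul Q (D⁻¹ * Cmat J K) jk) i
    have ecol : (fun i => (D⁻¹ * Cmat J K) i jk) = D⁻¹ *ᵥ cVec jk.1 jk.2 := by
      rw [GTAux.col_mul]; rfl
    rw [e1, e2, ecol, hQproj _ (GTAux.dinv_cVec_mem hμ jk.1 jk.2)]
  have hPC : PTperpᵀ * Cmat J K = Cmat J K := by
    funext i jk
    rw [congrFun (GTAux.col_mul PTperpᵀ (Cmat J K) jk) i]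
    have hcol : (fun i => Cmat J K i jk) = cVec jk.1 jk.2 := rfl
    rw [hcol]
    conv_lhs => rw [← GTAux.D_Dinv_cancel hμ (cVec jk.1 jk.2)]
    rw [GTAux.projT_fix hPTperp (GTAux.dinv_cVec_mem hμ jk.1 jk.2),
      GTAux.D_Dinv_cancel hμ]
    rfl
  have hVC : Vᵀ * Cmat J K = (Zred Z)ᵀ := by
    have step1 : Vᵀ * Cmat J K = Zᵀ * Cmat J K := by
      rw [hV, Matrix.transpose_mul, Matrix.mul_assoc, hPC]
    rw [step1]
    funext l jk
    have hentry : (Zᵀ * Cmat J K) l jk = (fun i => Z i l) ⬝ᵥ cVec jk.1 jk.2 := by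
      simp [Matrix.mul_apply, dotProduct, Cmat, Matrix.transpose_apply]
    rw [hentry, GTAux.dot_cVec]
    have h1 := congrFun (hZrow jk.1.succ) l
    have h2 := congrFun (hZcol jk.2.succ) l
    have h0 := congrFun (hZrow 0) l
    simp only [Pi.zero_apply] at h1 h2 h0
    have h0' : Z 0 l = 0 := by exact h0
    simp [Zred, Matrix.transpose_apply, h1, h2, h0, h0']
  have hQC : Q * (D⁻¹ * Cmat J K) = V * M⁻¹ * (Zred Z)ᵀ := by
    rw [hQ, Matrix.mul_assoc (V * M⁻¹), ← Matrix.mul_assoc (Vᵀ * D),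
      Matrix.mul_assoc Vᵀ D, hDD, Matrix.mul_one, hVC]
  have hZR : (Zred Z)ᵀ * (((Zred Z)ᵀ * Zred Z)⁻¹ * (Zred Z)ᵀ)ᵀ = 1 := by
    rw [← Matrix.transpose_mul, Matrix.mul_assoc,
      Matrix.nonsing_inv_mul _ ((Matrix.isUnit_iff_isUnit_det _).mp hGunit),
      Matrix.transpose_one]
  calc (Bmat J K)ᵀ * PH * D⁻¹ * Cmat J K * (((Zred Z)ᵀ * Zred Z)⁻¹ * (Zred Z)ᵀ)ᵀ
      = (Bmat J K)ᵀ * (PH * (D⁻¹ * Cmat J K)) * (((Zred Z)ᵀ * Zred Z)⁻¹ * (Zred Z)ᵀ)ᵀ := by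
        rw [Matrix.mul_assoc ((Bmat J K)ᵀ * PH), Matrix.mul_assoc (Bmat J K)ᵀ PH]
    _ = (Bmat J K)ᵀ * (V * M⁻¹ * (Zred Z)ᵀ) * (((Zred Z)ᵀ * Zred Z)⁻¹ * (Zred Z)ᵀ)ᵀ := by
        rw [hPHC, hQC]
    _ = (Bmat J K)ᵀ * (V * M⁻¹) *
          ((Zred Z)ᵀ * (((Zred Z)ᵀ * Zred Z)⁻¹ * (Zred Z)ᵀ)ᵀ) := by
        rw [← Matrix.mul_assoc (Bmat J K)ᵀ (V * M⁻¹) (Zred Z)ᵀ,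
          Matrix.mul_assoc ((Bmat J K)ᵀ * (V * M⁻¹)) (Zred Z)ᵀ]
    _ = (Bmat J K)ᵀ * (V * M⁻¹) := by rw [hZR, Matrix.mul_one]
    _ = (Bmat J K)ᵀ * V * M⁻¹ := by rw [Matrix.mul_assoc]
end
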